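/- There do not exist affine (over F_2) functions q_E : (F_2)^3 → F_2, q_R : (F_2)^2 → F_2, q_B : (F_2)^2 → F_2, and q_L : (F_2)^2 → F_2 such that q_R(b0,b1) ⊕ q_B(b1,b2) ⊕ q_L(b0,b2) = 0 for all (b0,b1,b2) ∈ (F_2)^3, and simultaneously q_E(0,0,0) = 0, q_E(0,1,1) ⊕ q_R(0,1) ⊕ q_L(0,1) = 1, q_E(1,0,1) ⊕ q_R(1,0) ⊕ q_B(0,1) = 1, and q_E(1,1,0) ⊕ q_B(1,0) ⊕ q_L(1,0) = 1. -/
import Mathlib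


/-- There are no affine functions over `F_2` reproducing the graph-state correlations. -/
theorem no_affine_strategy :
    ¬ ∃ (qE : ZMod 2 → ZMod 2 → ZMod 2 → ZMod 2)
        (qR qB qL : ZMod 2 → ZMod 2 → ZMod 2),
      (∃ c a0 a1 a2 : ZMod 2, ∀ x y z, qE x y z = c + a0 * x + a1 * y + a2 * z) ∧
      (∃ c a b : ZMod 2, ∀ x y, qR x y = c + a * x + b * y) ∧
      (∃ c a b : ZMod 2, ∀ x y, qB x y = c + a * x + b * y) ∧
      (∃ c a b : ZMod 2, ∀ x y, qL x y = c + a * x + b * y) ∧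
      (∀ b0 b1 b2 : ZMod 2, qR b0 b1 + qB b1 b2 + qL b0 b2 = 0) ∧
      qE 0 0 0 = 0 ∧
      qE 0 1 1 + qR 0 1 + qL 0 1 = 1 ∧
      qE 1 0 1 + qR 1 0 + qB 0 1 = 1 ∧
      qE 1 1 0 + qB 1 0 + qL 1 0 = 1 := by
  rintro ⟨qE, qR, qB, qL, ⟨ce, e0, e1, e2, hE⟩, ⟨cr, r0, r1, hR⟩, ⟨cb, b0, b1, hB⟩,
    ⟨cl, l0, l1, hL⟩, hcons, h1, h2, h3, h4⟩
  have c000 := hcons 0 0 0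
  simp only [hE, hR, hB, hL] at h1 h2 h3 h4 c000 hcons
  have c100 := hcons 1 0 0
  have c010 := hcons 0 1 0
  have c001 := hcons 0 0 1
  have two : (2 : ZMod 2) = 0 := by decide
  have : (1 : ZMod 2) = 0 := by
    linear_combination h1 + h2 + h3 + h4 + c000 + c100 + c010 + c001 +
      (2 - 2*ce - e0 - e1 - e2 - 3*cr - r0 - r1 - 3*cl - l0 - l1 - 3*cb - b0 - b1) * two
  simp at this
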